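/- (Terminal sign of the stationarity term) There exists τ ∈ [0,T) such that for all t ∈ [τ,T], p₁(t) < 0 and −β·S(t)·I(t)·(p₁(t) − p₂(t)) > 0. -/

import Mathlib

/-- Positivity for solutions of a scalar linear ODE `f' = c·f` with continuous
coefficient `c`, on `[0,T]`. -/
lemma pos_of_linear_ode (T : ℝ) (f c : ℝ → ℝ) (hc : Continuous c)
    (hf : ∀ t ∈ Set.Icc 0 T, HasDerivAt f (c t * f t) t) (hf0 : 0 < f 0) :
    ∀ t ∈ Set.Icc 0 T, 0 < f t := by
  set G : ℝ → ℝ := fun t => ∫ s in (0:ℝ)..t, c s with hG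
  have hGd : ∀ t : ℝ, HasDerivAt G (c t) t := fun t =>
    (hc.integral_hasStrictDerivAt 0 t).hasDerivAt
  set F : ℝ → ℝ := fun t => f t * Real.exp (-G t) with hF
  have hFd : ∀ t ∈ Set.Icc 0 T, HasDerivAt F 0 t := by
    intro t ht
    have h1 : HasDerivAt (fun s => Real.exp (-G s)) (Real.exp (-G t) * (-c t)) t := by
      have := ((hGd t).neg).exp
      simpa using this
    have : HasDerivAt (fun s => f s * Real.exp (-G s))
        (c t * f t * Real.exp (-G t) + f t * (Real.exp (-G t) * -c t)) t := (hf t ht).mul h1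
    convert this using 1
    ring
  have hcont : ContinuousOn F (Set.Icc 0 T) := fun t ht =>
    ((hFd t ht).continuousAt).continuousWithinAt
  have hconst : ∀ t ∈ Set.Icc 0 T, F t = F 0 := by
    intro t ht
    exact constant_of_has_deriv_right_zero hcont
      (fun x hx => ((hFd x (Set.mem_Icc_of_Ico hx)).hasDerivWithinAt)) t ht
  intro t ht
  have hFt : 0 < F t := by
    rw [hconst t ht]
    have : F 0 = f 0 * Real.exp (-G 0) := rfl
    rw [this]
    positivity
  have hexp : 0 < Real.exp (-G t) := Real.exp_pos _
  have hFt' : 0 < f t * Real.exp (-G t) := hFt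
  nlinarith [hFt', hexp]

/-- (Terminal sign of the stationarity term) There exists `τ ∈ [0,T)` such that
for all `t ∈ [τ,T]`, `p₁(t) < 0` and `−β·S(t)·I(t)·(p₁(t) − p₂(t)) > 0`. -/
theorem terminal_sign_of_stationarity_term
    (T β γ : ℝ) (hT : 0 < T) (hβ : 0 < β) (hγ : 0 < γ)
    (u S I R : ℝ → ℝ)
    (hu_cont : Continuous u)
    (hu_range : ∀ t ∈ Set.Icc 0 T, 0 ≤ u t ∧ u t < 1)
    (hS0 : 0 < S 0) (hI0 : 0 < I 0)
    (hS : ∀ t ∈ Set.Icc 0 T, HasDerivAt S (-(β * (1 - u t) * S t * I t)) t)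
    (hI : ∀ t ∈ Set.Icc 0 T, HasDerivAt I (β * (1 - u t) * S t * I t - γ * I t) t)
    (hR : ∀ t ∈ Set.Icc 0 T, HasDerivAt R (γ * I t) t)
    (p₁ p₂ : ℝ → ℝ)
    (hp₁ : ∀ t ∈ Set.Icc 0 T,
      HasDerivAt p₁ (-(β * (p₂ t - p₁ t) * (1 - u t) * I t)) t)
    (hp₂ : ∀ t ∈ Set.Icc 0 T,
      HasDerivAt p₂ (-(β * (p₂ t - p₁ t) * (1 - u t) * S t) + γ * p₂ t) t)
    (hp₁T : p₁ T = -1) (hp₂T : p₂ T = 0) :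
    ∃ τ, 0 ≤ τ ∧ τ < T ∧
      ∀ t ∈ Set.Icc τ T, p₁ t < 0 ∧ 0 < -(β * S t * I t * (p₁ t - p₂ t)) := by
  -- clamp function
  set cl : ℝ → ℝ := fun t => max 0 (min t T) with hcl
  have hclmem : ∀ t, cl t ∈ Set.Icc 0 T := by
    intro t
    constructor
    · exact le_max_left _ _
    · exact max_le hT.le (min_le_right _ _)
  have hcl_eq : ∀ t ∈ Set.Icc 0 T, cl t = t := by
    intro t ht
    simp only [hcl]
    rw [min_eq_left ht.2, max_eq_right ht.1]
  have hcl_cont : Continuous cl := continuous_const.max (continuous_id.min continuous_const)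
  have hScont : ContinuousOn S (Set.Icc 0 T) := fun t ht =>
    ((hS t ht).continuousAt).continuousWithinAt
  have hIcont : ContinuousOn I (Set.Icc 0 T) := fun t ht =>
    ((hI t ht).continuousAt).continuousWithinAt
  have hScl : Continuous (fun t => S (cl t)) :=
    (hScont.comp_continuous hcl_cont hclmem)
  have hIcl : Continuous (fun t => I (cl t)) :=
    (hIcont.comp_continuous hcl_cont hclmem)
  -- positivity of S
  have hSpos : ∀ t ∈ Set.Icc 0 T, 0 < S t := by
    apply pos_of_linear_ode T S (fun t => -(β * (1 - u t) * I (cl t)))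
    · exact ((continuous_const.mul (continuous_const.sub hu_cont)).mul hIcl).neg
    · intro t ht
      have := hS t ht
      rw [hcl_eq t ht]
      convert this using 1
      ring
    · exact hS0
  -- positivity of I
  have hIpos : ∀ t ∈ Set.Icc 0 T, 0 < I t := by
    apply pos_of_linear_ode T I (fun t => β * (1 - u t) * S (cl t) - γ)
    · exact ((continuous_const.mul (continuous_const.sub hu_cont)).mul hScl).sub
        continuous_const
    · intro t ht
      have := hI t ht
      rw [hcl_eq t ht]
      convert this using 1
      ring
    · exact hI0
  -- continuity of p₁, p₂ at T
  have hTmem : T ∈ Set.Icc (0:ℝ) T := ⟨hT.le, le_refl T⟩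
  have hp₁c : ContinuousAt p₁ T := (hp₁ T hTmem).continuousAt
  have hp₂c : ContinuousAt p₂ T := (hp₂ T hTmem).continuousAt
  have h1 : ∀ᶠ t in nhds T, p₁ t < 0 := by
    have : p₁ T < 0 := by rw [hp₁T]; norm_num
    exact hp₁c.eventually_lt continuousAt_const this
  have h2 : ∀ᶠ t in nhds T, 0 < p₂ t - p₁ t := by
    have hc : ContinuousAt (fun t => p₂ t - p₁ t) T := hp₂c.sub hp₁c
    have : (0:ℝ) < p₂ T - p₁ T := by rw [hp₁T, hp₂T]; norm_num
    exact continuousAt_const.eventually_lt hc this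
  obtain ⟨δ, hδ, hball⟩ := Metric.eventually_nhds_iff_ball.mp (h1.and h2)
  refine ⟨max 0 (T - δ / 2), le_max_left _ _, ?_, ?_⟩
  · apply max_lt hT
    linarith
  · intro t ht
    have ht0 : t ∈ Set.Icc 0 T := ⟨le_trans (le_max_left _ _) ht.1, ht.2⟩
    have htb : t ∈ Metric.ball T δ := by
      rw [Metric.mem_ball, Real.dist_eq, abs_sub_lt_iff]
      constructor
      · linarith [ht.2]
      · have : T - δ / 2 ≤ t := le_trans (le_max_right _ _) ht.1
        linarith
    obtain ⟨hA, hB⟩ := hball t htb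
    refine ⟨hA, ?_⟩
    have hSp := hSpos t ht0
    have hIp := hIpos t ht0
    nlinarith [mul_pos (mul_pos (mul_pos hβ hSp) hIp) hB]
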